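/- Let ι be a finite type, l a positive natural number, f : ι → Fin l, and let A be a square matrix over a (possibly noncommutative) ring, indexed by ι, that is block lower triangular with respect to f (A i j = 0 whenever f i < f j). Write A = D + Q where D is the block diagonal part of A (D i j = A i j if f i = f j, else 0) and Q = A − D. Then for every n ≥ 1, A^n = Σ_{k=0}^{min(n, l−1)} Σ_{(a₀,…,a_k) : a₀+⋯+a_k = n−k} D^{a₀} · Q · D^{a₁} · Q ⋯ Q · D^{a_k}, where the inner sum ranges over all (k+1)-tuples of nonnegative integers summing to n − k. -/

import Mathlib

open scoped BigOperators

open Finset Finset.Nat Matrix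

section Aux

variable {R : Type*} [Ring R] {ι : Type*} [Fintype ι] [DecidableEq ι]

/-- Alternating product term sum: `Σ_{a₀+⋯+a_k = m} D^{a₀} Q D^{a₁} ⋯ Q D^{a_k}`. -/
private def Tm (D Q : Matrix ι ι R) (k m : ℕ) : Matrix ι ι R :=
  ∑ a ∈ Finset.Nat.antidiagonalTuple (k + 1) m,
    D ^ (a 0) * (List.ofFn (fun i : Fin k => Q * D ^ (a i.succ))).prod

private lemma sum_antidiagonalTuple_succ {M : Type*} [AddCommMonoid M] (k m : ℕ)
    (g : (Fin (k + 1) → ℕ) → M) :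
    ∑ a ∈ antidiagonalTuple (k + 1) m, g a =
      ∑ p ∈ antidiagonal m, ∑ a ∈ antidiagonalTuple k p.2, g (Fin.cons p.1 a) := by
  rw [Finset.sum_sigma']
  refine (Finset.sum_bij' (fun x _ => Fin.cons x.1.1 x.2)
    (fun b _ => ⟨(b 0, ∑ i, b (Fin.succ i)), Fin.tail b⟩) ?_ ?_ ?_ ?_ ?_).symm
  · rintro ⟨⟨x, y⟩, a⟩ hx
    simp only [Finset.mem_sigma, Finset.mem_antidiagonal,
      Finset.Nat.mem_antidiagonalTuple] at hx ⊢
    rw [Fin.sum_univ_succ]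
    simpa [hx.2] using hx.1
  · intro b hb
    simp only [Finset.Nat.mem_antidiagonalTuple] at hb
    simp only [Finset.mem_sigma, Finset.mem_antidiagonal,
      Finset.Nat.mem_antidiagonalTuple]
    constructor
    · rw [← hb, Fin.sum_univ_succ]
      exact Finset.HasAntidiagonal.mem_antidiagonal.mpr rfl
    · rfl
  · rintro ⟨⟨x, y⟩, a⟩ hx
    simp only [Finset.mem_sigma, Finset.mem_antidiagonal,
      Finset.Nat.mem_antidiagonalTuple] at hx
    ext : 1
    · simp [Fin.cons_succ, hx.2]
    · simp [Fin.tail_cons]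
  · intro b _
    exact Fin.cons_self_tail b
  · rintro ⟨⟨x, y⟩, a⟩ _
    rfl

private lemma Tm_zero (D Q : Matrix ι ι R) (m : ℕ) : Tm D Q 0 m = D ^ m := by
  simp [Tm, Finset.Nat.antidiagonalTuple_one]

private lemma Tm_succ (D Q : Matrix ι ι R) (k m : ℕ) :
    Tm D Q (k + 1) m = ∑ p ∈ antidiagonal m, D ^ p.1 * (Q * Tm D Q k p.2) := by
  unfold Tm
  rw [sum_antidiagonalTuple_succ]
  refine Finset.sum_congr rfl fun p hp => ?_
  have step : ∀ a : Fin (k + 1) → ℕ,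
      D ^ ((Fin.cons p.1 a : Fin (k + 1 + 1) → ℕ) 0) *
        (List.ofFn fun i : Fin (k + 1) =>
          Q * D ^ ((Fin.cons p.1 a : Fin (k + 1 + 1) → ℕ) i.succ)).prod =
      D ^ p.1 * (Q * (D ^ (a 0) *
        (List.ofFn fun i : Fin k => Q * D ^ (a i.succ)).prod)) := by
    intro a
    simp only [List.ofFn_succ, Fin.cons_zero, Fin.cons_succ, List.prod_cons, mul_assoc]
  calc (∑ a ∈ antidiagonalTuple (k + 1) p.2,
        D ^ ((Fin.cons p.1 a : Fin (k + 1 + 1) → ℕ) 0) *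
          (List.ofFn fun i : Fin (k + 1) =>
            Q * D ^ ((Fin.cons p.1 a : Fin (k + 1 + 1) → ℕ) i.succ)).prod)
      = ∑ a ∈ antidiagonalTuple (k + 1) p.2, D ^ p.1 * (Q * (D ^ (a 0) *
          (List.ofFn fun i : Fin k => Q * D ^ (a i.succ)).prod)) :=
        Finset.sum_congr rfl fun a _ => step a
    _ = D ^ p.1 * (Q * ∑ a ∈ antidiagonalTuple (k + 1) p.2, D ^ (a 0) *
          (List.ofFn fun i : Fin k => Q * D ^ (a i.succ)).prod) := by
        rw [Finset.mul_sum, Finset.mul_sum]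

private lemma Tm_succ_zero (D Q : Matrix ι ι R) (k : ℕ) :
    Tm D Q (k + 1) 0 = Q * Tm D Q k 0 := by
  rw [Tm_succ]
  simp [Finset.Nat.antidiagonal_zero]

private lemma Tm_zero_succ (D Q : Matrix ι ι R) (m : ℕ) :
    Tm D Q 0 (m + 1) = D * Tm D Q 0 m := by
  rw [Tm_zero, Tm_zero, pow_succ']

private lemma Tm_succ_succ (D Q : Matrix ι ι R) (k m : ℕ) :
    Tm D Q (k + 1) (m + 1) = Q * Tm D Q k (m + 1) + D * Tm D Q (k + 1) m := by
  rw [Tm_succ, Finset.Nat.sum_antidiagonal_succ]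
  simp only [pow_zero, one_mul, pow_succ']
  rw [Tm_succ, Finset.mul_sum]
  congr 1
  refine Finset.sum_congr rfl fun p _ => ?_
  rw [mul_assoc]

private lemma S_succ (D Q : Matrix ι ι R) (n : ℕ) :
    ∑ p ∈ antidiagonal (n + 1), Tm D Q p.1 p.2 =
      D * ∑ p ∈ antidiagonal n, Tm D Q p.1 p.2 +
      Q * ∑ p ∈ antidiagonal n, Tm D Q p.1 p.2 := by
  cases n with
  | zero =>
      simp only [Finset.Nat.antidiagonal_zero, Finset.sum_singleton]
      rw [Finset.Nat.sum_antidiagonal_succ]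
      simp only [Finset.Nat.antidiagonal_zero, Finset.sum_singleton]
      rw [Tm_zero_succ, Tm_succ_zero]
  | succ m =>
      have e1 : (∑ p ∈ antidiagonal (m + 1 + 1), Tm D Q p.1 p.2) =
          Tm D Q (m + 1 + 1) 0 + ∑ p ∈ antidiagonal (m + 1), Tm D Q p.1 (p.2 + 1) :=
        Finset.Nat.sum_antidiagonal_succ'
      have e2 : (∑ p ∈ antidiagonal (m + 1), Tm D Q p.1 (p.2 + 1)) =
          Tm D Q 0 (m + 1 + 1) + ∑ p ∈ antidiagonal m, Tm D Q (p.1 + 1) (p.2 + 1) :=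
        Finset.Nat.sum_antidiagonal_succ
      have e3 : (∑ p ∈ antidiagonal (m + 1), Tm D Q p.1 p.2) =
          Tm D Q 0 (m + 1) + ∑ p ∈ antidiagonal m, Tm D Q (p.1 + 1) p.2 :=
        Finset.Nat.sum_antidiagonal_succ
      have e4 : (∑ p ∈ antidiagonal (m + 1), Tm D Q p.1 p.2) =
          Tm D Q (m + 1) 0 + ∑ p ∈ antidiagonal m, Tm D Q p.1 (p.2 + 1) :=
        Finset.Nat.sum_antidiagonal_succ'
      rw [e1, e2]
      nth_rewrite 1 [e3]
      rw [e4]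
      simp only [Tm_succ_succ, Tm_zero_succ, Tm_succ_zero, mul_add, Finset.mul_sum,
        Finset.sum_add_distrib]
      abel

private lemma pow_eq_sum_Tm (D Q : Matrix ι ι R) (n : ℕ) :
    (D + Q) ^ n = ∑ p ∈ antidiagonal n, Tm D Q p.1 p.2 := by
  induction n with
  | zero => simp [Finset.Nat.antidiagonal_zero, Tm_zero]
  | succ n ih =>
      rw [pow_succ', ih, S_succ, add_mul, Finset.mul_sum, Finset.mul_sum]

/-- `Drop f c M` : every nonzero entry of `M` drops the block index by at least `c`. -/
private def Drop {l : ℕ} (f : ι → Fin l) (c : ℕ) (M : Matrix ι ι R) : Prop :=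
  ∀ i j, M i j ≠ 0 → (f j : ℕ) + c ≤ (f i : ℕ)

private lemma Drop.mul {l : ℕ} {f : ι → Fin l} {c d : ℕ} {M N : Matrix ι ι R}
    (hM : Drop f c M) (hN : Drop f d N) : Drop f (c + d) (M * N) := by
  intro i j h
  rw [Matrix.mul_apply] at h
  obtain ⟨t, -, ht⟩ := Finset.exists_ne_zero_of_sum_ne_zero h
  have h1 : M i t ≠ 0 := fun h0 => ht (by rw [h0, zero_mul])
  have h2 : N t j ≠ 0 := fun h0 => ht (by rw [h0, mul_zero])
  have := hM i t h1
  have := hN t j h2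
  omega

private lemma Drop.one {l : ℕ} {f : ι → Fin l} : Drop f 0 (1 : Matrix ι ι R) := by
  intro i j h
  by_cases hij : i = j
  · subst hij; omega
  · exact absurd (Matrix.one_apply_ne hij) h

private lemma Drop.pow {l : ℕ} {f : ι → Fin l} {M : Matrix ι ι R}
    (hM : Drop f 0 M) (a : ℕ) : Drop f 0 (M ^ a) := by
  induction a with
  | zero => simpa using (Drop.one : Drop f 0 (1 : Matrix ι ι R))
  | succ a ih => rw [pow_succ]; simpa using ih.mul hM

private lemma Drop.listProd {l : ℕ} {f : ι → Fin l} {D Q : Matrix ι ι R}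
    (hD : Drop f 0 D) (hQ : Drop f 1 Q) (k : ℕ) (a : Fin k → ℕ) :
    Drop f k (List.ofFn (fun i : Fin k => Q * D ^ (a i))).prod := by
  induction k with
  | zero => simpa using (Drop.one : Drop f 0 (1 : Matrix ι ι R))
  | succ k ih =>
      rw [List.ofFn_succ, List.prod_cons]
      have h1 : Drop f 1 (Q * D ^ (a 0)) := by simpa using hQ.mul (hD.pow (a 0))
      have h2 := ih (fun i => a i.succ)
      have := h1.mul h2
      simpa [add_comm] using this

private lemma Drop.eq_zero {l : ℕ} {f : ι → Fin l} {c : ℕ} {M : Matrix ι ι R}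
    (hM : Drop f c M) (hc : l ≤ c) : M = 0 := by
  ext i j
  by_contra h
  have := hM i j h
  have hi := (f i).isLt
  omega

end Aux

/-- Expansion of powers of a block lower triangular matrix `A = D + Q` (with `D` its block
diagonal part and `Q` strictly block lower triangular) into alternating products: for `n ≥ 1`,
`A^n = Σ_{k=0}^{min(n, l-1)} Σ_{a₀+⋯+a_k = n-k} D^{a₀} Q D^{a₁} Q ⋯ Q D^{a_k}`. -/
theorem pow_blockTriangular_expansion
    {R : Type*} [Ring R] {ι : Type*} [Fintype ι] [DecidableEq ι]
    (l : ℕ) (hl : 0 < l) (f : ι → Fin l)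
    (A D Q : Matrix ι ι R)
    (htri : ∀ i j, f i < f j → A i j = 0)
    (hD : ∀ i j, D i j = if f i = f j then A i j else 0)
    (hQ : Q = A - D)
    (n : ℕ) (hn : 1 ≤ n) :
    A ^ n = ∑ k ∈ Finset.range (min n (l - 1) + 1),
      ∑ a ∈ Finset.Nat.antidiagonalTuple (k + 1) (n - k),
        D ^ (a 0) * (List.ofFn (fun i : Fin k => Q * D ^ (a i.succ))).prod := by
  have hA : A = D + Q := by rw [hQ]; abel
  have hDrD : Drop f 0 D := by
    intro i j h
    rw [hD] at h
    by_cases hij : f i = f j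
    · simp [hij]
    · simp [hij] at h
  have hDrQ : Drop f 1 Q := by
    intro i j h
    rw [hQ] at h
    simp only [Matrix.sub_apply, hD] at h
    rcases lt_trichotomy (f i) (f j) with hlt | heq | hgt
    · exact absurd (by simp [htri i j hlt, hlt.ne]) h
    · exact absurd (by simp [heq]) h
    · exact Nat.succ_le_of_lt hgt
  have key : A ^ n = ∑ k ∈ Finset.range (n + 1), Tm D Q k (n - k) := by
    rw [hA, pow_eq_sum_Tm, Finset.Nat.sum_antidiagonal_eq_sum_range_succ_mk]
  have hTmzero : ∀ k m, l ≤ k → Tm D Q k m = (0 : Matrix ι ι R) := by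
    intro k m hk
    rw [Tm]
    refine Finset.sum_eq_zero fun a _ => ?_
    have h1 := (hDrD.pow (a 0)).mul (Drop.listProd hDrD hDrQ k (fun i => a i.succ))
    rw [zero_add] at h1
    exact h1.eq_zero hk
  have hsub : Finset.range (min n (l - 1) + 1) ⊆ Finset.range (n + 1) :=
    Finset.range_subset_range.2 (by omega)
  have hz : ∀ k ∈ Finset.range (n + 1), k ∉ Finset.range (min n (l - 1) + 1) →
      Tm D Q k (n - k) = (0 : Matrix ι ι R) := by
    intro k hk hk'
    simp only [Finset.mem_range] at hk hk'
    exact hTmzero k (n - k) (by omega)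
  have : ∑ k ∈ Finset.range (n + 1), Tm D Q k (n - k) =
      ∑ k ∈ Finset.range (min n (l - 1) + 1), Tm D Q k (n - k) :=
    (Finset.sum_subset hsub hz).symm
  rw [key, this]
  rfl
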